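/- Let n ≥ 2 and let H be an n×n real symmetric matrix with eigenvalues λ₁ ≤ λ₂ ≤ ⋯ ≤ λₙ. Suppose there is perfect state transfer from vertex 1 to vertex 2 at time t₀, i.e. |(exp(i t₀ H))₁₂| = 1. Then for every real h with |h|·(λₙ − λ₁) < π, the fidelity at the perturbed time satisfies p(t₀ + h) ≥ (1/4)·|e^{i h λ₁} + e^{i h λₙ}|². -/

import Mathlib

open Matrix

/-- The time evolution `exp(i t H)` of a real symmetric Hamiltonian `H`,
regarded as a complex matrix. -/
noncomputable def timeEvo {n : ℕ} (H : Matrix (Fin n) (Fin n) ℝ) (t : ℝ) :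
    Matrix (Fin n) (Fin n) ℂ :=
  NormedSpace.exp (Complex.I • (t : ℂ) • H.map (fun x => (x : ℂ)))

private lemma timeEvo_entry {n : ℕ} (μ : Fin n → ℝ) (Q : Matrix (Fin n) (Fin n) ℝ)
    (hQ : Qᵀ * Q = 1) (t : ℝ) (i j : Fin n) :
    timeEvo (Qᵀ * Matrix.diagonal μ * Q) t i j
      = ∑ k, Complex.exp (Complex.I * t * μ k) * ((Q k i : ℂ) * (Q k j : ℂ)) := by
  classical
  set P : Matrix (Fin n) (Fin n) ℂ := Q.map (fun x => (x : ℂ)) with hPdef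
  have hmapfun : (fun x : ℝ => (x : ℂ)) = ⇑Complex.ofRealHom := rfl
  have hPtP : Pᵀ * P = 1 := by
    have := congrArg (fun M : Matrix (Fin n) (Fin n) ℝ => M.map (fun x : ℝ => (x : ℂ))) hQ
    rw [hPdef]
    simpa [hmapfun, Matrix.map_mul, Matrix.transpose_map, Matrix.map_one Complex.ofRealHom
      (map_zero _) (map_one _)] using this
  have hPPt : P * Pᵀ = 1 := mul_eq_one_comm.mp hPtP
  have hPinv : P⁻¹ = Pᵀ := Matrix.inv_eq_right_inv hPPt
  have hPunit : IsUnit P := ⟨⟨P, Pᵀ, hPPt, hPtP⟩, rfl⟩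
  have hmap : (Qᵀ * Matrix.diagonal μ * Q).map (fun x : ℝ => (x : ℂ))
      = Pᵀ * Matrix.diagonal (fun k => (μ k : ℂ)) * P := by
    rw [hmapfun, Matrix.map_mul, Matrix.map_mul, Matrix.transpose_map,
      Matrix.diagonal_map (map_zero _)]
    rfl
  have hsmul : Complex.I • (t : ℂ) • (Pᵀ * Matrix.diagonal (fun k => (μ k : ℂ)) * P)
      = Pᵀ * Matrix.diagonal (fun k => Complex.I * t * μ k) * P := by
    have hdiag : (Matrix.diagonal fun k => Complex.I * (t : ℂ) * (μ k : ℂ))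
        = (Complex.I * (t : ℂ)) • Matrix.diagonal (fun k => (μ k : ℂ)) := by
      rw [← Matrix.diagonal_smul]
      congr 1
    simp only [smul_smul, hdiag, Matrix.smul_mul, Matrix.mul_smul, Matrix.mul_assoc]
  have hconj : Pᵀ * Matrix.diagonal (fun k => Complex.I * t * μ k) * P
      = P⁻¹ * Matrix.diagonal (fun k => Complex.I * t * μ k) * P := by rw [hPinv]
  rw [timeEvo, hmap, hsmul, hconj, Matrix.exp_conj' P _ hPunit, hPinv,
    Matrix.exp_diagonal, Pi.exp_def]
  rw [Matrix.mul_assoc, Matrix.mul_apply]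
  refine Finset.sum_congr rfl fun k _ => ?_
  rw [Matrix.diagonal_mul]
  simp [hPdef, Matrix.transpose_apply, Matrix.map_apply, ← Complex.exp_eq_exp_ℂ]
  ring

private lemma eq_abs_of_re_eq_abs {w : ℂ} (h : w.re = ‖w‖) :
    w = (‖w‖ : ℂ) := by
  have hsq := Complex.sq_norm w
  rw [Complex.normSq_apply] at hsq
  have habs2 : ‖w‖ ^ 2 = w.re * w.re := by rw [h]; ring
  have him : w.im * w.im = 0 := by linarith
  have him0 : w.im = 0 := mul_self_eq_zero.mp him
  apply Complex.ext <;> simp [← h, him0]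

private theorem stmt0_aux {n : ℕ} (H : Matrix (Fin n) (Fin n) ℝ)
    (μ : Fin n → ℝ) (hmono : Monotone μ)
    (Q : Matrix (Fin n) (Fin n) ℝ) (hQ : Qᵀ * Q = 1)
    (hHQ : H = Qᵀ * Matrix.diagonal μ * Q)
    (t₀ : ℝ) (i0 i1 iN : Fin n)
    (hi0 : (i0 : ℕ) = 0) (hiN : (iN : ℕ) = n - 1)
    (hPST : ‖timeEvo H t₀ i0 i1‖ = 1)
    (h : ℝ) (hh : |h| * (μ iN - μ i0) < Real.pi) :
    (1 / 4) * ‖Complex.exp (Complex.I * (h : ℂ) * (μ i0 : ℂ)) +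
        Complex.exp (Complex.I * (h : ℂ) * (μ iN : ℂ))‖ ^ 2
      ≤ ‖timeEvo H (t₀ + h) i0 i1‖ ^ 2 := by
  classical
  obtain ⟨δ, hδdef⟩ : ∃ x : ℝ, x = μ iN - μ i0 := ⟨_, rfl⟩
  obtain ⟨c, hcdef⟩ : ∃ x : ℝ, x = (μ i0 + μ iN) / 2 := ⟨_, rfl⟩
  rw [← hδdef] at hh
  have hi0N : i0 ≤ iN := by rw [Fin.le_def, hi0]; exact Nat.zero_le _
  have hδ0 : 0 ≤ δ := by rw [hδdef]; exact sub_nonneg.mpr (hmono hi0N)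
  have hhδ : |h| * δ < Real.pi := hh
  have hhδ0 : 0 ≤ |h| * δ := mul_nonneg (abs_nonneg h) hδ0
  have hπ2 : |h| * δ / 2 ≤ Real.pi / 2 := by linarith
  have hcos_nonneg : 0 ≤ Real.cos (|h| * δ / 2) :=
    Real.cos_nonneg_of_mem_Icc ⟨by linarith [Real.pi_pos], hπ2⟩
  -- overlaps
  set a : Fin n → ℝ := fun k => Q k i0 * Q k i1 with ha
  have hQcol : ∀ j : Fin n, ∑ k, Q k j * Q k j = 1 := by
    intro j
    have := congrFun (congrFun hQ j) j
    simpa [Matrix.mul_apply, Matrix.one_apply] using this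
  have habs_le : ∑ k, |a k| ≤ 1 := by
    have hle : ∀ k, |a k| ≤ (Q k i0 * Q k i0 + Q k i1 * Q k i1) / 2 := by
      intro k
      rw [ha]
      simp only
      rw [abs_mul]
      nlinarith [abs_nonneg (Q k i0), abs_nonneg (Q k i1), abs_mul_abs_self (Q k i0),
        abs_mul_abs_self (Q k i1), sq_nonneg (|Q k i0| - |Q k i1|)]
    calc ∑ k, |a k| ≤ ∑ k, (Q k i0 * Q k i0 + Q k i1 * Q k i1) / 2 :=
          Finset.sum_le_sum fun k _ => hle k
      _ = 1 := by
          rw [← Finset.sum_div, Finset.sum_add_distrib, hQcol i0, hQcol i1]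
          norm_num
  -- entry formula
  have hU : ∀ t : ℝ, timeEvo H t i0 i1 = ∑ k, Complex.exp (Complex.I * t * μ k) * (a k : ℂ) := by
    intro t
    rw [hHQ, timeEvo_entry μ Q hQ t i0 i1]
    refine Finset.sum_congr rfl fun k _ => ?_
    rw [ha]
    push_cast
    ring
  set u : ℂ := timeEvo H t₀ i0 i1 with hudef
  have huabs : ‖u‖ = 1 := hPST
  set z : Fin n → ℂ := fun k => Complex.exp (Complex.I * t₀ * μ k) * (a k : ℂ) with hz
  have hu_sum : u = ∑ k, z k := hU t₀
  have hzabs : ∀ k, ‖z k‖ = |a k| := by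
    intro k
    rw [hz]
    simp only
    rw [norm_mul, Complex.norm_exp, show (Complex.I * t₀ * (μ k : ℂ)).re = 0 from by simp,
      Real.exp_zero, one_mul, Complex.norm_real, Real.norm_eq_abs]
  -- equality in the triangle inequality
  have hterm_le : ∀ k ∈ Finset.univ, ((starRingEnd ℂ) u * z k).re ≤ ‖z k‖ := by
    intro k _
    calc ((starRingEnd ℂ) u * z k).re ≤ ‖(starRingEnd ℂ) u * z k‖ :=
          Complex.re_le_norm _
      _ = ‖z k‖ := by rw [norm_mul, Complex.norm_conj, huabs, one_mul]
  have hsum_re : ∑ k, ((starRingEnd ℂ) u * z k).re = 1 := by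
    rw [← Complex.re_sum, ← Finset.mul_sum, ← hu_sum]
    rw [mul_comm, Complex.mul_conj]
    rw [Complex.normSq_eq_norm_sq, huabs]
    norm_num
  have habs_sum : ∑ k, ‖z k‖ ≤ 1 := by
    calc ∑ k, ‖z k‖ = ∑ k, |a k| := Finset.sum_congr rfl fun k _ => hzabs k
      _ ≤ 1 := habs_le
  have hsums_eq : ∑ k, ((starRingEnd ℂ) u * z k).re = ∑ k, ‖z k‖ := by
    have h2 := Finset.sum_le_sum hterm_le
    linarith
  have hzsum1 : ∑ k, |a k| = 1 := by
    have : ∑ k, ‖z k‖ = 1 := by rw [← hsums_eq, hsum_re]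
    rw [← this]
    exact Finset.sum_congr rfl fun k _ => (hzabs k).symm
  have hterm_eq := (Finset.sum_eq_sum_iff_of_le hterm_le).mp hsums_eq
  have hw : ∀ k, (starRingEnd ℂ) u * z k = ((|a k| : ℝ) : ℂ) := by
    intro k
    have habsw : ‖(starRingEnd ℂ) u * z k‖ = ‖z k‖ := by
      rw [norm_mul, Complex.norm_conj, huabs, one_mul]
    have hre : ((starRingEnd ℂ) u * z k).re = ‖(starRingEnd ℂ) u * z k‖ := by
      rw [habsw]; exact hterm_eq k (Finset.mem_univ k)
    rw [eq_abs_of_re_eq_abs hre, habsw, hzabs]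
  -- the perturbed amplitude
  set v : ℂ := timeEvo H (t₀ + h) i0 i1 with hvdef
  have hv : v = ∑ k, Complex.exp (Complex.I * h * μ k) * z k := by
    rw [hvdef, hU (t₀ + h)]
    refine Finset.sum_congr rfl fun k _ => ?_
    rw [hz]
    simp only
    rw [← mul_assoc, ← Complex.exp_add]
    congr 2
    push_cast
    ring
  have hr : Complex.exp ((-(h * c) : ℝ) * Complex.I) * ((starRingEnd ℂ) u * v)
      = ∑ k, ((|a k| : ℝ) : ℂ) * Complex.exp (((h * (μ k - c)) : ℝ) * Complex.I) := by
    rw [hv, Finset.mul_sum, Finset.mul_sum]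
    refine Finset.sum_congr rfl fun k _ => ?_
    rw [show (starRingEnd ℂ) u * (Complex.exp (Complex.I * h * μ k) * z k)
        = Complex.exp (Complex.I * h * μ k) * ((starRingEnd ℂ) u * z k) from by ring, hw k,
      ← mul_assoc, ← Complex.exp_add,
      show ((-(h * c) : ℝ) : ℂ) * Complex.I + Complex.I * h * μ k
        = (((h * (μ k - c)) : ℝ) : ℂ) * Complex.I from by push_cast; ring]
    ring
  have hre_r : (Complex.exp ((-(h * c) : ℝ) * Complex.I) * ((starRingEnd ℂ) u * v)).re
      = ∑ k, |a k| * Real.cos (h * (μ k - c)) := by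
    rw [hr, Complex.re_sum]
    refine Finset.sum_congr rfl fun k _ => ?_
    have hre1 : (((|a k| : ℝ) : ℂ) * Complex.exp ((((h * (μ k - c)) : ℝ) : ℂ) * Complex.I)).re
        = |a k| * (Complex.exp ((((h * (μ k - c)) : ℝ) : ℂ) * Complex.I)).re := by
      simp [Complex.mul_re]
    rw [hre1, Complex.exp_ofReal_mul_I_re]
  -- cosine bounds
  have hcosk : ∀ k, Real.cos (|h| * δ / 2) ≤ Real.cos (h * (μ k - c)) := by
    intro k
    have hk0 : μ i0 ≤ μ k := hmono (by rw [Fin.le_def, hi0]; exact Nat.zero_le _)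
    have hkN : μ k ≤ μ iN := hmono (by rw [Fin.le_def, hiN]; have := k.isLt; omega)
    have hmid : |μ k - c| ≤ δ / 2 := by
      rw [abs_le]
      constructor <;> (rw [hcdef, hδdef]) <;> · push_cast; linarith
    have habs1 : |h * (μ k - c)| ≤ |h| * δ / 2 := by
      rw [abs_mul]
      calc |h| * |μ k - c| ≤ |h| * (δ / 2) :=
            mul_le_mul_of_nonneg_left hmid (abs_nonneg h)
        _ = |h| * δ / 2 := by ring
    calc Real.cos (|h| * δ / 2) ≤ Real.cos |h * (μ k - c)| :=
          Real.cos_le_cos_of_nonneg_of_le_pi (abs_nonneg _)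
            (by linarith [Real.pi_pos]) habs1
      _ = Real.cos (h * (μ k - c)) := Real.cos_abs _
  have hre_ge : Real.cos (|h| * δ / 2)
      ≤ (Complex.exp ((-(h * c) : ℝ) * Complex.I) * ((starRingEnd ℂ) u * v)).re := by
    rw [hre_r]
    calc Real.cos (|h| * δ / 2) = ∑ k, |a k| * Real.cos (|h| * δ / 2) := by
          rw [← Finset.sum_mul, hzsum1, one_mul]
      _ ≤ ∑ k, |a k| * Real.cos (h * (μ k - c)) :=
          Finset.sum_le_sum fun k _ => mul_le_mul_of_nonneg_left (hcosk k) (abs_nonneg _)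
  have habs_v : Real.cos (|h| * δ / 2) ≤ ‖v‖ := by
    refine le_trans hre_ge (le_trans (Complex.re_le_norm _) ?_)
    rw [norm_mul, norm_mul, Complex.norm_conj, huabs,
      Complex.norm_exp_ofReal_mul_I, one_mul, one_mul]
  -- computing the right-hand side
  have hcs : Real.cos (h * δ / 2) ^ 2 = 1 / 2 + Real.cos (h * δ) / 2 := by
    have := Real.cos_sq (h * δ / 2)
    rwa [show 2 * (h * δ / 2) = h * δ from by ring] at this
  have hRHS : (1 / 4) * ‖Complex.exp (Complex.I * (h : ℂ) * (μ i0 : ℂ)) +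
        Complex.exp (Complex.I * (h : ℂ) * (μ iN : ℂ))‖ ^ 2 = Real.cos (h * δ / 2) ^ 2 := by
    have hfac : Complex.exp (Complex.I * (h : ℂ) * (μ i0 : ℂ)) +
          Complex.exp (Complex.I * (h : ℂ) * (μ iN : ℂ))
        = Complex.exp (Complex.I * (h : ℂ) * (μ i0 : ℂ)) *
            (1 + Complex.exp (((h * δ) : ℝ) * Complex.I)) := by
      rw [mul_add, mul_one, ← Complex.exp_add]
      congr 1
      rw [hδdef]
      push_cast
      ring
    rw [hfac, norm_mul, Complex.norm_exp,
      show (Complex.I * (h : ℂ) * (μ i0 : ℂ)).re = 0 from by simp, Real.exp_zero, one_mul,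
      Complex.sq_norm, Complex.exp_mul_I, ← Complex.ofReal_cos, ← Complex.ofReal_sin,
      Complex.normSq_apply]
    simp only [Complex.add_re, Complex.add_im, Complex.one_re, Complex.one_im,
      Complex.ofReal_re, Complex.ofReal_im, Complex.mul_re, Complex.mul_im,
      Complex.I_re, Complex.I_im]
    nlinarith [Real.sin_sq_add_cos_sq (h * δ), hcs]
  have hceq : Real.cos (h * δ / 2) = Real.cos (|h| * δ / 2) := by
    have habs2 : |h * δ / 2| = |h| * δ / 2 := by
      rw [abs_div, abs_mul, abs_of_nonneg hδ0]
      norm_num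
    rw [← Real.cos_abs (h * δ / 2), habs2]
  calc (1 / 4) * ‖Complex.exp (Complex.I * (h : ℂ) * (μ i0 : ℂ)) +
        Complex.exp (Complex.I * (h : ℂ) * (μ iN : ℂ))‖ ^ 2
      = Real.cos (h * δ / 2) ^ 2 := hRHS
    _ = Real.cos (|h| * δ / 2) ^ 2 := by rw [hceq]
    _ ≤ ‖v‖ ^ 2 := pow_le_pow_left₀ hcos_nonneg habs_v 2

/-- Theorem 1 (timing-error bound): if there is perfect state transfer from vertex 1 to
vertex 2 at time `t₀` and `|h| (λₙ - λ₁) < π`, then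
`p(t₀+h) ≥ ¼ |e^{ihλ₁} + e^{ihλₙ}|²`. -/
theorem stmt0 {n : ℕ} (hn : 2 ≤ n) (H : Matrix (Fin n) (Fin n) ℝ) (hH : H.IsSymm)
    (μ : Fin n → ℝ) (hmono : Monotone μ)
    (Q : Matrix (Fin n) (Fin n) ℝ) (hQ : Qᵀ * Q = 1)
    (hHQ : H = Qᵀ * Matrix.diagonal μ * Q)
    (t₀ : ℝ)
    (hPST : ‖timeEvo H t₀ ⟨0, by omega⟩ ⟨1, by omega⟩‖ = 1)
    (h : ℝ) (hh : |h| * (μ ⟨n - 1, by omega⟩ - μ ⟨0, by omega⟩) < Real.pi) :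
    (1 / 4) * ‖Complex.exp (Complex.I * (h : ℂ) * (μ ⟨0, by omega⟩ : ℂ)) +
        Complex.exp (Complex.I * (h : ℂ) * (μ ⟨n - 1, by omega⟩ : ℂ))‖ ^ 2
      ≤ ‖timeEvo H (t₀ + h) ⟨0, by omega⟩ ⟨1, by omega⟩‖ ^ 2 :=
  stmt0_aux H μ hmono Q hQ hHQ t₀ _ _ _ rfl rfl hPST h hh
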